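/- (Out-degree reduction preserving path counts.) Let G be a finite directed acyclic graph with vertex set V and edge set E, and let s, t ∈ V. Then there exists a finite directed acyclic graph H with at most |V| + |E| vertices, in which every vertex has out-degree at most 2, together with vertices s', t' of H, such that the number of directed paths from s' to t' in H equals the number of directed paths from s to t in G. (Here a directed path from a to b is a finite sequence a = v₀, v₁, …, v_k = b with an edge from v_i to v_{i+1} for each i; in an acyclic graph there are finitely many such paths.) -/

import Mathlib

variable {α : Type*}

/-- `l` is a directed path from `s` to `t` in the graph with edge set `E`:
a nonempty list of vertices starting at `s`, ending at `t`, with every consecutive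
pair an edge. -/
def IsDiPath (E : Finset (α × α)) (s t : α) (l : List α) : Prop :=
  l.head? = some s ∧ l.getLast? = some t ∧ l.Chain' (fun u v => (u, v) ∈ E)

/-- The directed graph with edge set `E` has no directed cycle. -/
def EdgeAcyclic (E : Finset (α × α)) : Prop :=
  ∀ (k : ℕ) (v : ℕ → α), 1 ≤ k → v k = v 0 → ¬ (∀ j < k, (v j, v (j + 1)) ∈ E)

open Relation

section Aux

/-- The edge relation of an edge set. -/
def EdgeRel (E : Finset (α × α)) : α → α → Prop := fun x y => (x, y) ∈ E

lemma edgeAcyclic_of_irrefl (E : Finset (α × α))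
    (h : ∀ a, ¬ TransGen (EdgeRel E) a a) : EdgeAcyclic E := by
  intro k v hk hv0 hedges
  have key : ∀ j, 1 ≤ j → j ≤ k → TransGen (EdgeRel E) (v 0) (v j) := by
    intro j
    induction j with
    | zero => omega
    | succ i ih =>
      intro _ hik
      rcases Nat.eq_zero_or_pos i with hi | hi
      · subst hi
        exact TransGen.single (hedges 0 (by omega))
      · exact (ih hi (by omega)).tail (hedges i (by omega))
  exact h (v 0) (hv0 ▸ key k hk le_rfl)

lemma not_transGen_of_edgeAcyclic (E : Finset (α × α)) (h : EdgeAcyclic E) (a : α) :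
    ¬ TransGen (EdgeRel E) a a := by
  intro hT
  obtain ⟨b, hab, hba⟩ := (TransGen.head'_iff).1 hT
  obtain ⟨l, hchain, hlast⟩ := List.exists_isChain_cons_of_relationReflTransGen hba
  have hchain2 : List.Chain' (EdgeRel E) (a :: b :: l) := List.IsChain.cons_cons hab hchain
  have hlen : (a :: b :: l).length = l.length + 2 := by simp
  refine h (l.length + 1) (fun j => (a :: b :: l).getD j a) (by omega) ?_ ?_
  · show (a :: b :: l).getD (l.length + 1) a = (a :: b :: l).getD 0 a
    rw [List.getD_eq_getElem _ _ (by omega), List.getD_eq_getElem _ _ (by omega)]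
    have : (a :: b :: l).getLast (by simp) = a := by
      rw [List.getLast_cons (by simp)]; exact hlast
    rw [List.getLast_eq_getElem] at this
    simpa [hlen] using this
  · intro j hj
    rw [List.Chain', List.isChain_iff_getElem] at hchain2
    have := hchain2 j (by omega)
    show ((a :: b :: l).getD j a, (a :: b :: l).getD (j+1) a) ∈ E
    rw [List.getD_eq_getElem _ _ (by omega), List.getD_eq_getElem _ _ (by omega)]
    exact this

lemma nodup_of_chain' (E : Finset (α × α)) (h : EdgeAcyclic E) (l : List α) (u : α)
    (hc : l.Chain' (fun x y => (x, y) ∈ E)) : l.Nodup := by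
  by_contra hnd
  rw [List.nodup_iff_injective_get] at hnd
  simp only [Function.Injective] at hnd
  push_neg at hnd
  obtain ⟨i, j, hget, hne⟩ := hnd
  wlog hij : (i : ℕ) < (j : ℕ) generalizing i j
  · exact this j i hget.symm (Ne.symm hne) (by omega)
  rw [List.Chain', List.isChain_iff_getElem] at hc
  refine h ((j : ℕ) - i) (fun x => l.getD ((i : ℕ) + x) u) (by omega) ?_ ?_
  · show l.getD ((i:ℕ) + ((j:ℕ) - i)) u = l.getD (i + 0) u
    rw [show (i:ℕ) + ((j:ℕ) - i) = (j:ℕ) by omega, Nat.add_zero]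
    rw [List.getD_eq_getElem _ _ (by omega), List.getD_eq_getElem _ _ (by omega)]
    have : l[(j:ℕ)] = l[(i:ℕ)] := by simpa [List.get_eq_getElem] using hget.symm
    exact this
  · intro x hx
    have := hc ((i:ℕ) + x) (by omega)
    show (l.getD ((i:ℕ) + x) u, l.getD ((i:ℕ) + (x+1)) u) ∈ E
    rw [show (i:ℕ) + (x+1) = (i:ℕ) + x + 1 by omega]
    rw [List.getD_eq_getElem _ _ (by omega), List.getD_eq_getElem _ _ (by omega)]
    exact this

lemma finite_diPath {n : ℕ} (E : Finset (Fin n × Fin n)) (h : EdgeAcyclic E) (u t : Fin n) :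
    Finite {l : List (Fin n) // IsDiPath E u t l} := by
  have hsub : {l : List (Fin n) | IsDiPath E u t l} ⊆ {l | l.length ≤ n} := by
    intro l hl
    have hnd := nodup_of_chain' E h l u hl.2.2
    have := List.Nodup.length_le_card hnd
    simpa using this
  exact ((List.finite_length_le (Fin n) n).subset hsub).to_subtype

/-- Decomposition of the set of paths from `u` to `t`. -/
def diPathEquiv [DecidableEq α] (E : Finset (α × α)) (u t : α) :
    {l : List α // IsDiPath E u t l} ≃
      PLift (u = t) ⊕ (Σ v : {v : α // (u, v) ∈ E}, {l : List α // IsDiPath E v.1 t l}) where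
  toFun p :=
    match p with
    | ⟨[], h⟩ => absurd h.1 (by simp)
    | ⟨[a], h⟩ => Sum.inl ⟨by
        have h1 : a = u := by simpa using h.1
        have h2 : a = t := by simpa [List.getLast?] using h.2.1
        rw [← h1, h2]⟩
    | ⟨a :: b :: l, h⟩ => Sum.inr ⟨⟨b, by
        have h1 : a = u := by simpa using h.1
        have := h.2.2
        rw [List.Chain', List.isChain_cons_cons] at this
        exact h1 ▸ this.1⟩, ⟨b :: l, by
        refine ⟨by simp, ?_, ?_⟩
        · rw [← List.getLast?_cons_cons]; exact h.2.1
        · exact (List.isChain_cons_cons.1 h.2.2).2⟩⟩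
  invFun q :=
    match q with
    | Sum.inl ⟨h⟩ => ⟨[u], ⟨by simp, by simp [h, List.getLast?], List.IsChain.singleton _⟩⟩
    | Sum.inr ⟨⟨v, hv⟩, ⟨l, hl⟩⟩ => ⟨u :: l, by
        obtain ⟨h1, h2, h3⟩ := hl
        cases l with
        | nil => simp at h1
        | cons b l' =>
          have hbv : b = v := by simpa using h1
          refine ⟨by simp, by rwa [List.getLast?_cons_cons], ?_⟩
          rw [List.Chain', List.isChain_cons_cons]
          exact ⟨hbv ▸ hv, h3⟩⟩
  left_inv p := by
    obtain ⟨l, h⟩ := p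
    match l, h with
    | [], h => exact absurd h.1 (by simp)
    | [a], h =>
      have h1 : a = u := by simpa using h.1
      exact Subtype.ext (by simp [h1])
    | a :: b :: l, h =>
      have h1 : a = u := by simpa using h.1
      exact Subtype.ext (by simp [h1])
  right_inv q := by
    match q with
    | Sum.inl ⟨h⟩ => rfl
    | Sum.inr ⟨⟨v, hv⟩, ⟨l, hl⟩⟩ =>
      cases l with
      | nil => simpa using hl.1
      | cons b l' =>
        have hbv : b = v := by simpa using hl.1
        subst hbv
        rfl

lemma nat_card_sigma {ι : Type*} [Fintype ι] (f : ι → Type*) [∀ i, Finite (f i)] :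
    Nat.card (Σ i, f i) = ∑ i, Nat.card (f i) := by
  letI : ∀ i, Fintype (f i) := fun i => Fintype.ofFinite _
  simp [Nat.card_eq_fintype_card, Fintype.card_sigma]

lemma nat_card_plift_prop (p : Prop) [Decidable p] :
    Nat.card (PLift p) = if p then 1 else 0 := by
  by_cases h : p
  · haveI : Nonempty (PLift p) := ⟨⟨h⟩⟩
    simp [h, Nat.card_unique]
  · haveI : IsEmpty (PLift p) := ⟨fun x => h x.down⟩
    simp [h, Nat.card_of_isEmpty]

lemma card_diPath_rec {n : ℕ} (E : Finset (Fin n × Fin n)) (h : EdgeAcyclic E) (u t : Fin n) :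
    Nat.card {l : List (Fin n) // IsDiPath E u t l} =
      (if u = t then 1 else 0) +
        ∑ v ∈ Finset.univ.filter (fun v => (u, v) ∈ E),
          Nat.card {l : List (Fin n) // IsDiPath E v t l} := by
  haveI : ∀ v : Fin n, Finite {l : List (Fin n) // IsDiPath E v t l} :=
    fun v => finite_diPath E h v t
  haveI : ∀ v : {v : Fin n // (u, v) ∈ E}, Finite {l : List (Fin n) // IsDiPath E v.1 t l} :=
    fun v => finite_diPath E h v.1 t
  rw [Nat.card_congr (diPathEquiv E u t), Nat.card_sum,
    nat_card_sigma, nat_card_plift_prop]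
  congr 1
  exact (Finset.sum_subtype (Finset.univ.filter (fun v => (u, v) ∈ E)) (fun x => by simp)
    (fun v => Nat.card {l : List (Fin n) // IsDiPath E v t l})).symm

end Aux

section Construction
variable {n : ℕ} (L : List (Fin n × Fin n))

def csrc (i : Fin L.length) : Fin n := (L.get i).1
def ctgt (i : Fin L.length) : Fin n := (L.get i).2

def nxt (i : Fin L.length) : Option (Fin L.length) :=
  (Finset.univ.filter (fun j => i < j ∧ csrc L j = csrc L i)).min

def fstIdx (u : Fin n) : Option (Fin L.length) :=
  (Finset.univ.filter (fun j => csrc L j = u)).min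

def embV (u : Fin n) : Fin (n + L.length) := Fin.castAdd _ u
def edgV (i : Fin L.length) : Fin (n + L.length) := Fin.natAdd n i

def newE : Finset (Fin (n + L.length) × Fin (n + L.length)) :=
  ((Finset.univ.filter (fun i : Fin L.length => fstIdx L (csrc L i) = some i)).image
      (fun i => (embV L (csrc L i), edgV L i))) ∪
    ((Finset.univ.filter (fun p : Fin L.length × Fin L.length => nxt L p.1 = some p.2)).image
      (fun p => (edgV L p.1, edgV L p.2))) ∪
    (Finset.univ.image (fun i : Fin L.length => (edgV L i, embV L (ctgt L i))))

lemma embV_inj {u v : Fin n} : embV L u = embV L v ↔ u = v := by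
  simp [embV, Fin.ext_iff]

lemma edgV_inj {i j : Fin L.length} : edgV L i = edgV L j ↔ i = j := by
  simp [edgV, Fin.ext_iff]

lemma embV_ne_edgV (u : Fin n) (i : Fin L.length) : embV L u ≠ edgV L i := by
  intro h
  have h' := congrArg Fin.val h
  simp only [embV, edgV, Fin.coe_castAdd, Fin.coe_natAdd] at h'
  have := u.isLt
  omega

lemma nxt_eq_some {i j : Fin L.length} (h : nxt L i = some j) :
    i < j ∧ csrc L j = csrc L i := by
  have := Finset.mem_of_min h
  simpa using this

lemma nxt_min {i j : Fin L.length} (h : nxt L i = some j) {j' : Fin L.length}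
    (h1 : i < j') (h2 : csrc L j' = csrc L i) : j ≤ j' := by
  have hmem : j' ∈ Finset.univ.filter (fun j => i < j ∧ csrc L j = csrc L i) := by
    simp [h1, h2]
  have := Finset.min_le hmem
  rw [nxt] at h
  rw [h, WithTop.some_eq_coe, WithTop.coe_le_coe] at this
  exact this

lemma nxt_none {i : Fin L.length} (h : nxt L i = none) {j' : Fin L.length}
    (h1 : i < j') : csrc L j' ≠ csrc L i := by
  intro h2
  have hmem : j' ∈ Finset.univ.filter (fun j => i < j ∧ csrc L j = csrc L i) := by
    simp [h1, h2]
  rw [nxt] at h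
  rw [Finset.min_eq_top.1 h] at hmem
  simp at hmem

lemma fstIdx_eq_some {u : Fin n} {i : Fin L.length} (h : fstIdx L u = some i) :
    csrc L i = u := by
  have := Finset.mem_of_min h
  simpa using this

lemma fstIdx_min {u : Fin n} {i : Fin L.length} (h : fstIdx L u = some i)
    {j : Fin L.length} (hj : csrc L j = u) : i ≤ j := by
  have hmem : j ∈ Finset.univ.filter (fun j => csrc L j = u) := by simp [hj]
  have := Finset.min_le hmem
  rw [fstIdx] at h
  rw [h, WithTop.some_eq_coe, WithTop.coe_le_coe] at this
  exact this

lemma fstIdx_none {u : Fin n} (h : fstIdx L u = none) (j : Fin L.length) :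
    csrc L j ≠ u := by
  intro hj
  have hmem : j ∈ Finset.univ.filter (fun j => csrc L j = u) := by simp [hj]
  rw [fstIdx] at h
  rw [Finset.min_eq_top.1 h] at hmem
  simp at hmem

lemma mem_newE_iff (e : Fin (n + L.length) × Fin (n + L.length)) :
    e ∈ newE L ↔
      (∃ i, fstIdx L (csrc L i) = some i ∧ e = (embV L (csrc L i), edgV L i)) ∨
      (∃ i j, nxt L i = some j ∧ e = (edgV L i, edgV L j)) ∨
      (∃ i, e = (edgV L i, embV L (ctgt L i))) := by
  simp only [newE, Finset.mem_union, Finset.mem_image, Finset.mem_filter, Finset.mem_univ,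
    true_and, Prod.exists]
  constructor
  · rintro ((⟨i, hi, he⟩ | ⟨a, b, hab, he⟩) | ⟨i, he⟩)
    · exact Or.inl ⟨i, hi, he.symm⟩
    · exact Or.inr (Or.inl ⟨a, b, hab, he.symm⟩)
    · exact Or.inr (Or.inr ⟨i, he.symm⟩)
  · rintro (⟨i, hi, he⟩ | ⟨a, b, hab, he⟩ | ⟨i, he⟩)
    · exact Or.inl (Or.inl ⟨i, hi, he.symm⟩)
    · exact Or.inl (Or.inr ⟨a, b, hab, he.symm⟩)
    · exact Or.inr ⟨i, he.symm⟩

lemma mem_newE_emb (u : Fin n) (y : Fin (n + L.length)) :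
    (embV L u, y) ∈ newE L ↔ ∃ i, fstIdx L u = some i ∧ y = edgV L i := by
  rw [mem_newE_iff]
  constructor
  · rintro (⟨i, hi, he⟩ | ⟨a, b, hab, he⟩ | ⟨i, he⟩)
    · rw [Prod.mk.injEq] at he
      obtain ⟨h1, h2⟩ := he
      rw [embV_inj] at h1
      exact ⟨i, by rw [h1]; exact hi, h2⟩
    · rw [Prod.mk.injEq] at he
      exact absurd he.1 (embV_ne_edgV L u a)
    · rw [Prod.mk.injEq] at he
      exact absurd he.1 (embV_ne_edgV L u i)
  · rintro ⟨i, hi, hy⟩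
    exact Or.inl ⟨i, by rw [fstIdx_eq_some L hi]; exact hi, by rw [hy, fstIdx_eq_some L hi]⟩

lemma mem_newE_edg (i : Fin L.length) (y : Fin (n + L.length)) :
    (edgV L i, y) ∈ newE L ↔
      (∃ j, nxt L i = some j ∧ y = edgV L j) ∨ y = embV L (ctgt L i) := by
  rw [mem_newE_iff]
  constructor
  · rintro (⟨a, ha, he⟩ | ⟨a, b, hab, he⟩ | ⟨a, he⟩)
    · rw [Prod.mk.injEq] at he
      exact absurd he.1.symm (embV_ne_edgV L _ i)
    · rw [Prod.mk.injEq] at he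
      obtain ⟨h1, h2⟩ := he
      rw [edgV_inj] at h1
      exact Or.inl ⟨b, by rw [h1]; exact hab, h2⟩
    · rw [Prod.mk.injEq] at he
      obtain ⟨h1, h2⟩ := he
      rw [edgV_inj] at h1
      exact Or.inr (by rw [h2, h1])
  · rintro (⟨j, hj, hy⟩ | hy)
    · exact Or.inr (Or.inl ⟨i, j, hj, by rw [hy]⟩)
    · exact Or.inr (Or.inr ⟨i, by rw [hy]⟩)

lemma vertex_cases (x : Fin (n + L.length)) :
    (∃ u, x = embV L u) ∨ (∃ i, x = edgV L i) := by
  rcases lt_or_ge (x : ℕ) n with h | h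
  · exact Or.inl ⟨⟨x, h⟩, by simp [embV, Fin.ext_iff]⟩
  · refine Or.inr ⟨⟨(x : ℕ) - n, by have := x.isLt; omega⟩, ?_⟩
    simp only [edgV, Fin.ext_iff, Fin.coe_natAdd]
    omega

lemma newE_outdeg (x : Fin (n + L.length)) :
    ((newE L).filter (fun e => e.1 = x)).card ≤ 2 := by
  rcases vertex_cases L x with ⟨u, rfl⟩ | ⟨i, rfl⟩
  · refine le_trans (Finset.card_le_one.2 ?_) one_le_two
    rintro a ha b hb
    rw [Finset.mem_filter] at ha hb
    obtain ⟨ha1, ha2⟩ := ha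
    obtain ⟨hb1, hb2⟩ := hb
    have ha3 : (embV L u, a.2) ∈ newE L := by rw [← ha2, Prod.mk.eta]; exact ha1
    have hb3 : (embV L u, b.2) ∈ newE L := by rw [← hb2, Prod.mk.eta]; exact hb1
    rw [mem_newE_emb] at ha3 hb3
    obtain ⟨i, hi, hai⟩ := ha3
    obtain ⟨j, hj, hbj⟩ := hb3
    have : i = j := by rw [hi] at hj; exact Option.some_injective _ hj
    subst this
    have : a.2 = b.2 := by rw [hai, hbj]
    exact Prod.ext (ha2.trans hb2.symm) this
  · have hsub : (newE L).filter (fun e => e.1 = edgV L i) ⊆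
        insert (edgV L i, embV L (ctgt L i))
          ((nxt L i).elim ∅ (fun j => {(edgV L i, edgV L j)})) := by
      intro a ha
      rw [Finset.mem_filter] at ha
      obtain ⟨ha1, ha2⟩ := ha
      have ha3 : (edgV L i, a.2) ∈ newE L := by rw [← ha2, Prod.mk.eta]; exact ha1
      rw [mem_newE_edg] at ha3
      rcases ha3 with ⟨j, hj, hy⟩ | hy
      · rw [Finset.mem_insert]
        refine Or.inr ?_
        rw [hj]
        simp only [Option.elim_some, Finset.mem_singleton]
        rw [← ha2, ← hy]
      · rw [Finset.mem_insert]
        exact Or.inl (by rw [← ha2, ← hy])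
    refine le_trans (Finset.card_le_card hsub) ?_
    refine le_trans (Finset.card_insert_le _ _) ?_
    rcases h : nxt L i with _ | j <;> simp [h]

def proj (x : Fin (n + L.length)) : Fin n :=
  if h : (x : ℕ) < n then ⟨x, h⟩
  else csrc L ⟨(x : ℕ) - n, by have := x.isLt; omega⟩

lemma proj_embV (u : Fin n) : proj L (embV L u) = u := by
  have h : ((embV L u : Fin (n + L.length)) : ℕ) = (u : ℕ) := rfl
  rw [proj]
  rw [dif_pos (by rw [h]; exact u.isLt)]
  exact Fin.ext h

lemma proj_edgV (i : Fin L.length) : proj L (edgV L i) = csrc L i := by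
  have h : ((edgV L i : Fin (n + L.length)) : ℕ) = n + (i : ℕ) := rfl
  rw [proj]
  rw [dif_neg (by omega)]
  congr 1
  exact Fin.ext (by simp [h])

lemma newE_step {E : Finset (Fin n × Fin n)} (hmem : ∀ p ∈ L, p ∈ E)
    {x y : Fin (n + L.length)} (hxy : (x, y) ∈ newE L) :
    (proj L x = proj L y ∧ x < y) ∨ (proj L x, proj L y) ∈ E := by
  rw [mem_newE_iff] at hxy
  rcases hxy with ⟨i, _, he⟩ | ⟨i, j, hij, he⟩ | ⟨i, he⟩
  · rw [Prod.mk.injEq] at he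
    obtain ⟨h1, h2⟩ := he
    subst h1; subst h2
    left
    refine ⟨by rw [proj_embV, proj_edgV], ?_⟩
    rw [Fin.lt_def]
    show ((csrc L i : Fin n) : ℕ) < n + (i : ℕ)
    have := (csrc L i).isLt
    omega
  · rw [Prod.mk.injEq] at he
    obtain ⟨h1, h2⟩ := he
    subst h1; subst h2
    obtain ⟨hlt, hsrc⟩ := nxt_eq_some L hij
    left
    refine ⟨by rw [proj_edgV, proj_edgV, hsrc], ?_⟩
    rw [Fin.lt_def]
    show n + (i : ℕ) < n + (j : ℕ)
    rw [Fin.lt_def] at hlt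
    omega
  · rw [Prod.mk.injEq] at he
    obtain ⟨h1, h2⟩ := he
    subst h1; subst h2
    right
    rw [proj_edgV, proj_embV]
    exact hmem _ (by rw [show (csrc L i, ctgt L i) = L.get i from rfl]; exact List.get_mem L i)

lemma newE_acyclic {E : Finset (Fin n × Fin n)} (hE : EdgeAcyclic E)
    (hmem : ∀ p ∈ L, p ∈ E) : EdgeAcyclic (newE L) := by
  apply edgeAcyclic_of_irrefl
  intro a hT
  have key : ∀ x y : Fin (n + L.length), TransGen (EdgeRel (newE L)) x y →
      TransGen (EdgeRel E) (proj L x) (proj L y) ∨ (proj L x = proj L y ∧ x < y) := by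
    intro x y hxy
    induction hxy with
    | single h =>
      rcases newE_step L hmem h with ⟨he, hlt⟩ | he
      · exact Or.inr ⟨he, hlt⟩
      · exact Or.inl (TransGen.single he)
    | tail hab hbc ih =>
      rcases newE_step L hmem hbc with ⟨he, hlt⟩ | he
      · rcases ih with h | ⟨he2, hlt2⟩
        · exact Or.inl (by rwa [he] at h)
        · exact Or.inr ⟨he2.trans he, hlt2.trans hlt⟩
      · rcases ih with h | ⟨he2, hlt2⟩
        · exact Or.inl (h.tail he)
        · exact Or.inl (by rw [he2]; exact TransGen.single he)
  rcases key a a hT with h | ⟨_, hlt⟩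
  · exact not_transGen_of_edgeAcyclic E hE _ h
  · exact lt_irrefl _ hlt

lemma newE_inner {E : Finset (Fin n × Fin n)} (hE : EdgeAcyclic E)
    (hmem : ∀ p : Fin n × Fin n, p ∈ L ↔ p ∈ E) (t : Fin n) :
    ∀ d (i : Fin L.length),
      L.length - (i : ℕ) ≤ d →
      (∀ w, (csrc L i, w) ∈ E →
        Nat.card {l // IsDiPath (newE L) (embV L w) (embV L t) l} =
          Nat.card {l // IsDiPath E w t l}) →
      Nat.card {l // IsDiPath (newE L) (edgV L i) (embV L t) l} =
        ∑ j ∈ Finset.univ.filter (fun j => csrc L j = csrc L i ∧ i ≤ j),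
          Nat.card {l // IsDiPath E (ctgt L j) t l} := by
  have hE' := newE_acyclic L hE (fun p hp => (hmem p).1 hp)
  intro d
  induction d with
  | zero => exact fun i hi _ => absurd hi (by have := i.isLt; omega)
  | succ d ih =>
    intro i hi hw
    have hne : edgV L i = embV L t ↔ False :=
      iff_false_intro (fun h => embV_ne_edgV L t i h.symm)
    rw [card_diPath_rec (newE L) hE' (edgV L i) (embV L t), if_neg hne.1, zero_add]
    have hedge : (csrc L i, ctgt L i) ∈ E :=
      (hmem _).1 (by rw [show (csrc L i, ctgt L i) = L.get i from rfl]
                     exact List.get_mem L i)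
    rcases h : nxt L i with _ | j₀
    · have hset : Finset.univ.filter (fun y => (edgV L i, y) ∈ newE L)
          = {embV L (ctgt L i)} := by
        ext y
        simp only [Finset.mem_filter, Finset.mem_univ, true_and, Finset.mem_singleton,
          mem_newE_edg, h]
        constructor
        · rintro (⟨j, hj, _⟩ | hy)
          · exact absurd hj (by simp)
          · exact hy
        · intro hy; exact Or.inr hy
      rw [hset, Finset.sum_singleton]
      have hset2 : Finset.univ.filter (fun j => csrc L j = csrc L i ∧ i ≤ j) = {i} := by
        ext j
        simp only [Finset.mem_filter, Finset.mem_univ, true_and, Finset.mem_singleton]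
        constructor
        · rintro ⟨h1, h2⟩
          rcases eq_or_lt_of_le h2 with h3 | h3
          · exact h3.symm
          · exact absurd h1 (nxt_none L h h3)
        · rintro rfl; exact ⟨rfl, le_rfl⟩
      rw [hset2, Finset.sum_singleton]
      exact hw _ hedge
    · obtain ⟨hij, hsrc⟩ := nxt_eq_some L h
      have hset : Finset.univ.filter (fun y => (edgV L i, y) ∈ newE L)
          = insert (embV L (ctgt L i)) {edgV L j₀} := by
        ext y
        simp only [Finset.mem_filter, Finset.mem_univ, true_and, Finset.mem_insert,
          Finset.mem_singleton, mem_newE_edg, h]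
        constructor
        · rintro (⟨j, hj, hy⟩ | hy)
          · rw [Option.some_inj] at hj
            exact Or.inr (by rw [hy, hj])
          · exact Or.inl hy
        · rintro (hy | hy)
          · exact Or.inr hy
          · exact Or.inl ⟨j₀, rfl, hy⟩
      rw [hset, Finset.sum_insert (by
        simp only [Finset.mem_singleton]
        exact embV_ne_edgV L _ _), Finset.sum_singleton]
      have hj₀ : Nat.card {l // IsDiPath (newE L) (edgV L j₀) (embV L t) l}
          = ∑ j ∈ Finset.univ.filter (fun j => csrc L j = csrc L j₀ ∧ j₀ ≤ j),
              Nat.card {l // IsDiPath E (ctgt L j) t l} := by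
        refine ih j₀ (by rw [Fin.lt_def] at hij; omega) ?_
        rw [hsrc]; exact hw
      rw [hj₀, hw _ hedge]
      have hset2 : Finset.univ.filter (fun j => csrc L j = csrc L i ∧ i ≤ j)
          = insert i (Finset.univ.filter (fun j => csrc L j = csrc L j₀ ∧ j₀ ≤ j)) := by
        ext j
        simp only [Finset.mem_filter, Finset.mem_univ, true_and, Finset.mem_insert]
        constructor
        · rintro ⟨h1, h2⟩
          rcases eq_or_lt_of_le h2 with h3 | h3
          · exact Or.inl h3.symm
          · exact Or.inr ⟨by rw [h1, hsrc], nxt_min L h h3 h1⟩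
        · rintro (rfl | ⟨h1, h2⟩)
          · exact ⟨rfl, le_rfl⟩
          · exact ⟨by rw [h1, hsrc], le_of_lt (lt_of_lt_of_le hij h2)⟩
      rw [hset2, Finset.sum_insert (by
        simp only [Finset.mem_filter, Finset.mem_univ, true_and, not_and]
        intro _
        exact not_le.2 hij)]

lemma newE_outer {E : Finset (Fin n × Fin n)} (hE : EdgeAcyclic E) (hnd : L.Nodup)
    (hmem : ∀ p : Fin n × Fin n, p ∈ L ↔ p ∈ E) (t : Fin n) (u : Fin n) :
    Nat.card {l // IsDiPath (newE L) (embV L u) (embV L t) l} =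
      Nat.card {l // IsDiPath E u t l} := by
  have hE' := newE_acyclic L hE (fun p hp => (hmem p).1 hp)
  haveI : IsTrans (Fin n) (TransGen (fun a b : Fin n => (b, a) ∈ E)) :=
    ⟨fun a b c h1 h2 => h1.trans h2⟩
  haveI : IsIrrefl (Fin n) (TransGen (fun a b : Fin n => (b, a) ∈ E)) :=
    ⟨fun a h => not_transGen_of_edgeAcyclic E hE a
      ((transGen_swap (r := EdgeRel E) (a := a) (b := a)).mp h)⟩
  have wf : WellFounded (TransGen (fun a b : Fin n => (b, a) ∈ E)) :=
    Finite.wellFounded_of_trans_of_irrefl _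
  refine wf.induction
    (C := fun u => Nat.card {l // IsDiPath (newE L) (embV L u) (embV L t) l} =
      Nat.card {l // IsDiPath E u t l}) u ?_
  intro u IH
  rw [card_diPath_rec (newE L) hE' (embV L u) (embV L t), card_diPath_rec E hE u t]
  have hif : (if embV L u = embV L t then (1:ℕ) else 0) = if u = t then 1 else 0 :=
    if_congr (embV_inj L) rfl rfl
  rw [hif]
  congr 1
  rcases h : fstIdx L u with _ | i₀
  · have h1 : Finset.univ.filter (fun y => (embV L u, y) ∈ newE L) = ∅ := by
      ext y
      simp only [Finset.mem_filter, Finset.mem_univ, true_and, mem_newE_emb, h,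
        Finset.notMem_empty, iff_false]
      rintro ⟨i, hi, _⟩
      exact absurd hi (by simp)
    have h2 : Finset.univ.filter (fun v => (u, v) ∈ E) = ∅ := by
      ext v
      simp only [Finset.mem_filter, Finset.mem_univ, true_and, Finset.notMem_empty, iff_false]
      intro hv
      obtain ⟨j, hj⟩ := List.mem_iff_get.1 ((hmem _).2 hv)
      exact fstIdx_none L h j (by rw [show csrc L j = (L.get j).1 from rfl, hj])
    rw [h1, h2]
    simp
  · have hsrc : csrc L i₀ = u := fstIdx_eq_some L h
    have h1 : Finset.univ.filter (fun y => (embV L u, y) ∈ newE L) = {edgV L i₀} := by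
      ext y
      simp only [Finset.mem_filter, Finset.mem_univ, true_and, mem_newE_emb, h,
        Finset.mem_singleton]
      constructor
      · rintro ⟨i, hi, hy⟩
        rw [Option.some_inj] at hi
        rw [hy, hi]
      · intro hy
        exact ⟨i₀, rfl, hy⟩
    rw [h1, Finset.sum_singleton]
    rw [newE_inner L hE hmem t L.length i₀ (by omega) ?hyp]
    case hyp => rw [hsrc]; intro w hw; exact IH w (TransGen.single hw)
    have h2 : Finset.univ.filter (fun j => csrc L j = csrc L i₀ ∧ i₀ ≤ j)
        = Finset.univ.filter (fun j => csrc L j = u) := by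
      ext j
      simp only [Finset.mem_filter, Finset.mem_univ, true_and, hsrc]
      exact ⟨fun p => p.1, fun a => ⟨a, fstIdx_min L h a⟩⟩
    rw [h2]
    refine Finset.sum_bij (fun j _ => ctgt L j) ?_ ?_ ?_ ?_
    · intro j hj
      simp only [Finset.mem_filter, Finset.mem_univ, true_and] at hj ⊢
      exact (hmem _).1 (by
        rw [show (u, ctgt L j) = L.get j from by rw [← hj]; rfl]
        exact List.get_mem L j)
    · intro j1 h1' j2 h2' heq
      simp only [Finset.mem_filter, Finset.mem_univ, true_and] at h1' h2'
      have hg : L.get j1 = L.get j2 := by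
        have e1 : L.get j1 = (csrc L j1, ctgt L j1) := rfl
        have e2 : L.get j2 = (csrc L j2, ctgt L j2) := rfl
        rw [e1, e2, h1', h2', heq]
      exact List.nodup_iff_injective_get.1 hnd hg
    · intro v hv
      simp only [Finset.mem_filter, Finset.mem_univ, true_and] at hv
      obtain ⟨j, hj⟩ := List.mem_iff_get.1 ((hmem _).2 hv)
      refine ⟨j, ?_, ?_⟩
      · simp only [Finset.mem_filter, Finset.mem_univ, true_and]
        rw [show csrc L j = (L.get j).1 from rfl, hj]
      · show ctgt L j = v
        rw [show ctgt L j = (L.get j).2 from rfl, hj]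
    · intro j hj
      rfl

end Construction

theorem outdegree_two_reduction (n : ℕ) (E : Finset (Fin n × Fin n))
    (hacyc : EdgeAcyclic E) (s t : Fin n) :
    ∃ m ≤ n + E.card, ∃ E' : Finset (Fin m × Fin m),
      EdgeAcyclic E' ∧
      (∀ u : Fin m, (E'.filter (fun e => e.1 = u)).card ≤ 2) ∧
      ∃ s' t' : Fin m,
        Nat.card {l : List (Fin m) // IsDiPath E' s' t' l} =
          Nat.card {l : List (Fin n) // IsDiPath E s t l} := by
  refine ⟨n + E.toList.length, by rw [Finset.length_toList], newE E.toList, ?_, ?_,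
    embV E.toList s, embV E.toList t, ?_⟩
  · exact newE_acyclic _ hacyc (fun p hp => Finset.mem_toList.1 hp)
  · exact newE_outdeg _
  · exact newE_outer E.toList hacyc (Finset.nodup_toList E) (fun p => Finset.mem_toList) t s
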